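/- Let t1 ∈ (0, t1*) and T = T(t1). Then the explicit trajectory is symmetric with respect to the x-axis: x*(T − t) = x*(t) for every t ∈ [0, T], and hence y*(T − t) = −y*(t) for every t ∈ [0, T]; in particular y*(T/2) = 0. -/

import Mathlib

open MeasureTheory Real Set Filter Topology

noncomputable section

/-- `t1* = (1/ω_max)·Arctan(ω_min/ω_max)` with `ω_min = √(−u_min)`, `ω_max = √u_max`. -/
def OCt1star (umin umax : ℝ) : ℝ :=
  (1 / Real.sqrt umax) * Real.arctan (Real.sqrt (-umin) / Real.sqrt umax)

/-- The period `T(t1)`. -/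
def OCT (umin umax t1 : ℝ) : ℝ :=
  (1 / Real.sqrt (-umin)) *
    Real.log ((1 + (Real.sqrt umax / Real.sqrt (-umin)) * Real.tan (Real.sqrt umax * t1)) /
              (1 - (Real.sqrt umax / Real.sqrt (-umin)) * Real.tan (Real.sqrt umax * t1)))
  + 2 * t1

/-- The optimal cost `C(t1) = 2·t1·u_max + (T(t1) − 2·t1)·u_min`. -/
def OCC (umin umax t1 : ℝ) : ℝ := 2 * t1 * umax + (OCT umin umax t1 - 2 * t1) * umin

/-- The explicit bang-bang control `u*` on `[0, T]`. -/
def OCustar (umin umax t1 T : ℝ) (t : ℝ) : ℝ :=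
  if t1 < t ∧ t < T - t1 then umin else umax

/-- The explicit trajectory `x*` on `[0, T]`. -/
def OCxstar (umin umax t1 T : ℝ) (t : ℝ) : ℝ :=
  if t ≤ t1 then Real.cos (Real.sqrt umax * t)
  else if t ≤ T - t1 then
    Real.cos (Real.sqrt umax * t1) * Real.cosh (Real.sqrt (-umin) * (t - t1))
      - (Real.sqrt umax / Real.sqrt (-umin)) * Real.sin (Real.sqrt umax * t1) *
        Real.sinh (Real.sqrt (-umin) * (t - t1))
  else Real.cos (Real.sqrt umax * (T - t))

lemma OC_middle_sym (A B ω L : ℝ)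
    (hK : A * (Real.exp (ω*L) - 1) = B * (Real.exp (ω*L) + 1)) (a b : ℝ) (hab : a + b = L) :
    A * Real.cosh (ω*a) - B * Real.sinh (ω*a) = A * Real.cosh (ω*b) - B * Real.sinh (ω*b) := by
  have hb : ω*b = ω*L - ω*a := by rw [← hab]; ring
  rw [Real.cosh_eq, Real.sinh_eq, Real.cosh_eq, Real.sinh_eq, hb, Real.exp_sub]
  have h1 := (Real.exp_pos (ω*a)).ne'
  have h2 := (Real.exp_pos (ω*L)).ne'
  rw [Real.exp_neg, Real.exp_neg, Real.exp_sub]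
  field_simp
  linear_combination (Real.exp (ω*a)^2 - Real.exp (ω*L)) * hK

/-- Symmetry of the explicit trajectory with respect to the `x`-axis:
`x*(T − t) = x*(t)` and `y*(T − t) = −y*(t)` on `[0, T]`, with `y* = (x*)'`;
in particular `y*(T/2) = 0`. -/
theorem explicit_trajectory_symmetric (umin umax : ℝ)
    (humin : umin < 0) (humax : 0 < umax)
    (t1 : ℝ) (ht1 : t1 ∈ Ioo 0 (OCt1star umin umax)) (T : ℝ) (hT : T = OCT umin umax t1) :
    (∀ t ∈ Icc (0:ℝ) T, OCxstar umin umax t1 T (T - t) = OCxstar umin umax t1 T t) ∧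
    (∀ t ∈ Icc (0:ℝ) T,
      deriv (OCxstar umin umax t1 T) (T - t) = -deriv (OCxstar umin umax t1 T) t) ∧
    deriv (OCxstar umin umax t1 T) (T / 2) = 0 := by
  obtain ⟨ht1pos, ht1lt⟩ := ht1
  have hω1 : 0 < Real.sqrt umax := Real.sqrt_pos.mpr humax
  have hω2 : 0 < Real.sqrt (-umin) := Real.sqrt_pos.mpr (by linarith)
  set ω₁ := Real.sqrt umax with hω₁def
  set ω₂ := Real.sqrt (-umin) with hω₂def
  have hφlt : ω₁ * t1 < Real.arctan (ω₂ / ω₁) := by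
    have h := ht1lt
    unfold OCt1star at h
    rw [← hω₁def, ← hω₂def] at h
    have h2 := (mul_lt_mul_iff_right₀ hω1).mpr h
    calc ω₁ * t1 < ω₁ * (1 / ω₁ * Real.arctan (ω₂ / ω₁)) := h2
      _ = Real.arctan (ω₂ / ω₁) := by field_simp
  have hφpos : 0 < ω₁ * t1 := by positivity
  have hφlt2 : ω₁ * t1 < π / 2 := lt_trans hφlt (Real.arctan_lt_pi_div_two _)
  have htanpos : 0 < Real.tan (ω₁ * t1) := Real.tan_pos_of_pos_of_lt_pi_div_two hφpos hφlt2
  have htanlt : Real.tan (ω₁ * t1) < ω₂ / ω₁ := by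
    have h := Real.tan_lt_tan_of_nonneg_of_lt_pi_div_two (le_of_lt hφpos)
      (Real.arctan_lt_pi_div_two _) hφlt
    rwa [Real.tan_arctan] at h
  set r := ω₁ / ω₂ * Real.tan (ω₁ * t1) with hrdef
  have hrpos : 0 < r := by positivity
  have hrlt : r < 1 := by
    have h := (mul_lt_mul_iff_right₀ (by positivity : (0:ℝ) < ω₁ / ω₂)).mpr htanlt
    calc r < ω₁ / ω₂ * (ω₂ / ω₁) := h
      _ = 1 := by field_simp
  set A := Real.cos (ω₁ * t1) with hAdef
  set B := ω₁ / ω₂ * Real.sin (ω₁ * t1) with hBdef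
  have hApos : 0 < A := Real.cos_pos_of_mem_Ioo ⟨by nlinarith [Real.pi_pos], hφlt2⟩
  have hrBA : r * A = B := by
    rw [hrdef, hAdef, hBdef, Real.tan_eq_sin_div_cos]
    have hc : Real.cos (ω₁ * t1) ≠ 0 := hApos.ne'
    field_simp
  have hE : Real.exp (ω₂ * (T - 2*t1)) = (1 + r) / (1 - r) := by
    have hTL : T - 2*t1 = 1 / ω₂ * Real.log ((1 + r) / (1 - r)) := by
      rw [hT]; unfold OCT; rw [← hω₁def, ← hω₂def, ← hrdef]; ring
    rw [hTL, show ω₂ * (1 / ω₂ * Real.log ((1 + r) / (1 - r)))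
        = Real.log ((1 + r) / (1 - r)) by field_simp]
    exact Real.exp_log (div_pos (by linarith) (by linarith))
  have hE1 : 1 < Real.exp (ω₂ * (T - 2*t1)) := by
    rw [hE, lt_div_iff₀ (by linarith)]
    linarith
  have hL : 2*t1 < T := by
    have h0 : 0 < ω₂ * (T - 2*t1) := by
      by_contra h
      push_neg at h
      have h2 := Real.exp_le_exp.mpr h
      rw [Real.exp_zero] at h2
      linarith
    nlinarith
  have hK : A * (Real.exp (ω₂ * (T - 2*t1)) - 1) = B * (Real.exp (ω₂ * (T - 2*t1)) + 1) := by
    rw [hE, ← hrBA]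
    have h1 : (1:ℝ) - r ≠ 0 := by linarith
    field_simp
    ring
  have htt : t1 < T - t1 := by linarith
  -- value lemmas
  have hx1 : ∀ s, s ≤ t1 → OCxstar umin umax t1 T s = Real.cos (ω₁ * s) := by
    intro s hs
    unfold OCxstar
    rw [if_pos hs, ← hω₁def]
  have hx2 : ∀ s, t1 ≤ s → s ≤ T - t1 →
      OCxstar umin umax t1 T s
        = A * Real.cosh (ω₂ * (s - t1)) - B * Real.sinh (ω₂ * (s - t1)) := by
    intro s hs1 hs2
    rcases eq_or_lt_of_le hs1 with h | h
    · rw [← h]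
      simp only [sub_self, mul_zero, Real.cosh_zero, Real.sinh_zero]
      rw [hx1 t1 le_rfl]
      ring
    · unfold OCxstar
      rw [if_neg (by linarith), if_pos hs2, ← hω₁def, ← hω₂def, ← hAdef, ← hBdef]
  have hx3 : ∀ s, T - t1 ≤ s → OCxstar umin umax t1 T s = Real.cos (ω₁ * (T - s)) := by
    intro s hs
    rcases eq_or_lt_of_le hs with h | h
    · rw [← h]
      rw [hx2 (T - t1) (by linarith) le_rfl]
      have hmid := OC_middle_sym A B ω₂ (T - 2*t1) hK (T - t1 - t1) 0 (by ring)
      simp only [mul_zero, Real.cosh_zero, Real.sinh_zero] at hmid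
      rw [show T - (T - t1) = t1 by ring]
      rw [← hAdef]
      linarith [hmid]
    · unfold OCxstar
      rw [if_neg (by linarith), if_neg (by linarith), ← hω₁def]
  -- global symmetry
  have S : ∀ t : ℝ, OCxstar umin umax t1 T (T - t) = OCxstar umin umax t1 T t := by
    intro t
    rcases le_total t t1 with h | h
    · rw [hx1 t h, hx3 (T - t) (by linarith), show T - (T - t) = t by ring]
    · rcases le_total t (T - t1) with h' | h'
      · rw [hx2 t h h', hx2 (T - t) (by linarith) (by linarith)]
        exact OC_middle_sym A B ω₂ (T - 2*t1) hK (T - t - t1) (t - t1) (by ring)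
      · rw [hx3 t h', hx1 (T - t) (by linarith)]
  have hfun : (fun t => OCxstar umin umax t1 T (T - t)) = OCxstar umin umax t1 T :=
    funext S
  have hd : ∀ t : ℝ, deriv (OCxstar umin umax t1 T) (T - t)
      = - deriv (OCxstar umin umax t1 T) t := by
    intro t
    conv_rhs => rw [← hfun]
    rw [deriv_comp_const_sub]
    ring
  refine ⟨fun t _ => S t, fun t _ => hd t, ?_⟩
  have h := hd (T/2)
  rw [show T - T/2 = T/2 by ring] at h
  linarith
end
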